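/- Let S = R ∪ B be a two-colored finite point set in ℝ². Let OPT₁ be the maximum size of a subfamily of R₁ consisting of pairwise-disjoint rectangles, and let M be the maximum size of an independent set of the graph G_{p,c}(R₁). Then OPT₁ ≤ M ≤ 2·OPT₁. -/

import Mathlib

open Set

/-- Points of the plane. -/
abbrev Pt : Type := ℝ × ℝ

/-- `D a b` is the closed axis-aligned rectangle having the segment from `a` to `b`
as a diagonal, i.e. the minimum enclosing axis-aligned rectangle of `a` and `b`. -/
def D (a b : Pt) : Set Pt :=
  Set.Icc (min a.1 b.1) (max a.1 b.1) ×ˢ Set.Icc (min a.2 b.2) (max a.2 b.2)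

/-- `Pierces R₂ R₁` : the projection of `R₁` onto the x-axis contains that of `R₂`,
and the projection of `R₂` onto the y-axis contains that of `R₁`. -/
def Pierces (R₂ R₁ : Set Pt) : Prop :=
  Prod.fst '' R₂ ⊆ Prod.fst '' R₁ ∧ Prod.snd '' R₁ ⊆ Prod.snd '' R₂

/-- Two rectangles have a piercing intersection if one of them pierces the other. -/
def PiercingInter (A B : Set Pt) : Prop := Pierces A B ∨ Pierces B A

/-- The four corner points of an axis-aligned rectangle given as a set. -/
def corners (A : Set Pt) : Set Pt :=
  {c | (c.1 = sInf (Prod.fst '' A) ∨ c.1 = sSup (Prod.fst '' A)) ∧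
       (c.2 = sInf (Prod.snd '' A) ∨ c.2 = sSup (Prod.snd '' A))}

/-- `A` and `B` have a corner intersection (w.r.t. the point set `P`):
each rectangle contains exactly one of the corner points of the other,
and these two contained corners are not elements of `P`. -/
def CornerInter (P : Set Pt) (A B : Set Pt) : Prop :=
  (∃! c, c ∈ corners B ∧ c ∈ A) ∧ (∃! c, c ∈ corners A ∧ c ∈ B) ∧
  ∀ c, ((c ∈ corners B ∧ c ∈ A) ∨ (c ∈ corners A ∧ c ∈ B)) → c ∉ P

/-- `A` and `B` have a point intersection: their intersection is precisely
a single point of `P`. -/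
def PointInter (P : Set Pt) (A B : Set Pt) : Prop := ∃ s ∈ P, A ∩ B = {s}

/-- `A` is a rectangle on the point set `P`. -/
def IsRectOn (P : Set Pt) (A : Set Pt) : Prop :=
  ∃ a b, a ∈ P ∧ b ∈ P ∧ a ≠ b ∧ A = D a b ∧ A ∩ P = {a, b}

/-- A complete set of rectangles on `P`: for every two elements `D a b`, `D a' b'`
of `H` that have a corner intersection, the other two rectangles of the form
`D p q` (with `p ∈ {a,a'}`, `q ∈ {b,b'}`) having a piercing intersection with
each other also belong to `H`. -/
def CompleteOn (P : Set Pt) (H : Set (Set Pt)) : Prop :=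
  (∀ A ∈ H, IsRectOn P A) ∧
  ∀ a b a' b' : Pt, a ∈ P → b ∈ P → a' ∈ P → b' ∈ P →
    D a b ∈ H → D a' b' ∈ H → CornerInter P (D a b) (D a' b') →
    PiercingInter (D a b') (D a' b) →
    D a b' ∈ H ∧ D a' b ∈ H

/-- Adjacency in the graph `G_{p,c}(H)` : a piercing or a corner intersection. -/
def AdjPC (P : Set Pt) (A B : Set Pt) : Prop := PiercingInter A B ∨ CornerInter P A B

/-- `I` is an independent set of the graph `G_{p,c}(H)`. -/
def IndepPC (P : Set Pt) (H I : Set (Set Pt)) : Prop :=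
  I ⊆ H ∧ I.Pairwise fun A B => ¬ AdjPC P A B

/-- The maximum size of an independent set of the graph `G_{p,c}(H)`. -/
noncomputable def maxIndepPC (P : Set Pt) (H : Set (Set Pt)) : ℕ :=
  sSup {n | ∃ I, IndepPC P H I ∧ I.ncard = n}

/-- The family `𝓡(S)` of monochromatic rectangles of the two-colored point set
`S = R ∪ B`: rectangles `D p q` with `p,q` distinct points of the same color
containing no point of `S` other than `p` and `q`. -/
def RS (R B : Set Pt) : Set (Set Pt) :=
  {A | ∃ p q, ((p ∈ R ∧ q ∈ R) ∨ (p ∈ B ∧ q ∈ B)) ∧ p ≠ q ∧ A = D p q ∧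
    A ∩ (R ∪ B) = {p, q}}

/-- The blue rectangles of `𝓡(S)` having a point of `S` at their bottom-left corner. -/
def Fam1Blue (R B : Set Pt) : Set (Set Pt) :=
  {A | ∃ p q, p ∈ B ∧ q ∈ B ∧ p ≠ q ∧ A = D p q ∧ A ∩ (R ∪ B) = {p, q} ∧
    (min p.1 q.1, min p.2 q.2) ∈ R ∪ B}

/-- The red rectangles of `𝓡(S)` having a point of `S` at their bottom-right corner. -/
def Fam1Red (R B : Set Pt) : Set (Set Pt) :=
  {A | ∃ p q, p ∈ R ∧ q ∈ R ∧ p ≠ q ∧ A = D p q ∧ A ∩ (R ∪ B) = {p, q} ∧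
    (max p.1 q.1, min p.2 q.2) ∈ R ∪ B}

/-- The family `𝓡₁`. -/
def Fam1 (R B : Set Pt) : Set (Set Pt) := Fam1Blue R B ∪ Fam1Red R B

/-- The family `𝓡₂`: blue rectangles with a point of `S` at the bottom-right corner
together with red rectangles with a point of `S` at the bottom-left corner. -/
def Fam2 (R B : Set Pt) : Set (Set Pt) :=
  {A | ∃ p q, p ∈ B ∧ q ∈ B ∧ p ≠ q ∧ A = D p q ∧ A ∩ (R ∪ B) = {p, q} ∧
    (max p.1 q.1, min p.2 q.2) ∈ R ∪ B} ∪
  {A | ∃ p q, p ∈ R ∧ q ∈ R ∧ p ≠ q ∧ A = D p q ∧ A ∩ (R ∪ B) = {p, q} ∧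
    (min p.1 q.1, min p.2 q.2) ∈ R ∪ B}

/-- The maximum size of a subfamily of `H` consisting of pairwise-disjoint rectangles. -/
noncomputable def maxDisjoint (H : Set (Set Pt)) : ℕ :=
  sSup {n | ∃ I ⊆ H, I.Pairwise (fun A B => A ∩ B = ∅) ∧ I.ncard = n}

/-! ### Auxiliary development -/

namespace Stmt9Aux

open Set

lemma mem_box {a1 a2 a3 a4 : ℝ} {z : Pt} :
    z ∈ (Icc a1 a2 ×ˢ Icc a3 a4 : Set Pt) ↔ a1 ≤ z.1 ∧ z.1 ≤ a2 ∧ a3 ≤ z.2 ∧ z.2 ≤ a4 := by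
  rw [Set.mem_prod, Set.mem_Icc, Set.mem_Icc]
  tauto

lemma fst_box {a1 a2 a3 a4 : ℝ} (h : a3 ≤ a4) :
    Prod.fst '' (Icc a1 a2 ×ˢ Icc a3 a4 : Set Pt) = Icc a1 a2 :=
  Set.fst_image_prod _ (nonempty_Icc.2 h)

lemma snd_box {a1 a2 a3 a4 : ℝ} (h : a1 ≤ a2) :
    Prod.snd '' (Icc a1 a2 ×ˢ Icc a3 a4 : Set Pt) = Icc a3 a4 :=
  Set.snd_image_prod (nonempty_Icc.2 h) _

lemma corners_box {a1 a2 a3 a4 : ℝ} (h12 : a1 ≤ a2) (h34 : a3 ≤ a4) :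
    corners (Icc a1 a2 ×ˢ Icc a3 a4 : Set Pt) =
      {c : Pt | (c.1 = a1 ∨ c.1 = a2) ∧ (c.2 = a3 ∨ c.2 = a4)} := by
  unfold corners
  rw [fst_box h34, snd_box h12, csInf_Icc h12, csSup_Icc h12, csInf_Icc h34, csSup_Icc h34]

lemma pierces_box {a1 a2 a3 a4 b1 b2 b3 b4 : ℝ}
    (hA : a1 ≤ a2) (hA' : a3 ≤ a4) (hB : b1 ≤ b2) (hB' : b3 ≤ b4)
    (h1 : b1 ≤ a1) (h2 : a2 ≤ b2) (h3 : a3 ≤ b3) (h4 : b4 ≤ a4) :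
    Pierces (Icc a1 a2 ×ˢ Icc a3 a4 : Set Pt) (Icc b1 b2 ×ˢ Icc b3 b4 : Set Pt) := by
  constructor
  · rw [fst_box hA', fst_box hB']
    exact Icc_subset_Icc h1 h2
  · rw [snd_box hA, snd_box hB]
    exact Icc_subset_Icc h3 h4

/-- Corner configuration: `A` to the upper-left, `B` to the lower-right. -/
lemma cornerInter_ul {S : Set Pt} {a1 a2 a3 a4 b1 b2 b3 b4 : ℝ}
    (x1 : a1 < b1) (x2 : b1 ≤ a2) (x3 : a2 < b2)
    (y1 : b3 < a3) (y2 : a3 ≤ b4) (y3 : b4 < a4)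
    (hc1 : ((a2, a3) : Pt) ∉ S) (hc2 : ((b1, b4) : Pt) ∉ S) :
    CornerInter S (Icc a1 a2 ×ˢ Icc a3 a4 : Set Pt) (Icc b1 b2 ×ˢ Icc b3 b4 : Set Pt) := by
  have h12 : a1 ≤ a2 := le_of_lt (lt_of_lt_of_le x1 x2)
  have h34 : a3 ≤ a4 := le_of_lt (lt_of_le_of_lt y2 y3)
  have hb12 : b1 ≤ b2 := le_of_lt (lt_of_le_of_lt x2 x3)
  have hb34 : b3 ≤ b4 := le_of_lt (lt_of_lt_of_le y1 y2)
  have hcA := corners_box h12 h34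
  have hcB := corners_box hb12 hb34
  have huB : ∀ c : Pt, c ∈ corners (Icc b1 b2 ×ˢ Icc b3 b4 : Set Pt) →
      c ∈ (Icc a1 a2 ×ˢ Icc a3 a4 : Set Pt) → c = (b1, b4) := by
    intro c hc hm
    rw [hcB] at hc
    rw [mem_box] at hm
    obtain ⟨hx, hy⟩ := hc
    have hx' : c.1 = b1 := hx.resolve_right (fun h => by rw [h] at hm; linarith [hm.2.1])
    have hy' : c.2 = b4 := hy.resolve_left (fun h => by rw [h] at hm; linarith [hm.2.2.1])
    exact Prod.ext hx' hy'
  have huA : ∀ c : Pt, c ∈ corners (Icc a1 a2 ×ˢ Icc a3 a4 : Set Pt) →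
      c ∈ (Icc b1 b2 ×ˢ Icc b3 b4 : Set Pt) → c = (a2, a3) := by
    intro c hc hm
    rw [hcA] at hc
    rw [mem_box] at hm
    obtain ⟨hx, hy⟩ := hc
    have hx' : c.1 = a2 := hx.resolve_left (fun h => by rw [h] at hm; linarith [hm.1])
    have hy' : c.2 = a3 := hy.resolve_right (fun h => by rw [h] at hm; linarith [hm.2.2.2])
    exact Prod.ext hx' hy'
  have hmB : ((b1, b4) : Pt) ∈ (Icc a1 a2 ×ˢ Icc a3 a4 : Set Pt) := by
    rw [mem_box]; exact ⟨le_of_lt x1, x2, y2, le_of_lt y3⟩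
  have hmA : ((a2, a3) : Pt) ∈ (Icc b1 b2 ×ˢ Icc b3 b4 : Set Pt) := by
    rw [mem_box]; exact ⟨x2, le_of_lt x3, le_of_lt y1, y2⟩
  have hcB' : ((b1, b4) : Pt) ∈ corners (Icc b1 b2 ×ˢ Icc b3 b4 : Set Pt) := by
    rw [hcB]; exact ⟨Or.inl rfl, Or.inr rfl⟩
  have hcA' : ((a2, a3) : Pt) ∈ corners (Icc a1 a2 ×ˢ Icc a3 a4 : Set Pt) := by
    rw [hcA]; exact ⟨Or.inr rfl, Or.inl rfl⟩
  refine ⟨⟨(b1, b4), ⟨hcB', hmB⟩, fun c hc => huB c hc.1 hc.2⟩,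
    ⟨(a2, a3), ⟨hcA', hmA⟩, fun c hc => huA c hc.1 hc.2⟩, ?_⟩
  rintro c (⟨h1, h2⟩ | ⟨h1, h2⟩)
  · rw [huB c h1 h2]; exact hc2
  · rw [huA c h1 h2]; exact hc1

/-- Corner configuration: `A` to the lower-left, `B` to the upper-right. -/
lemma cornerInter_ll {S : Set Pt} {a1 a2 a3 a4 b1 b2 b3 b4 : ℝ}
    (x1 : a1 < b1) (x2 : b1 ≤ a2) (x3 : a2 < b2)
    (y1 : a3 < b3) (y2 : b3 ≤ a4) (y3 : a4 < b4)
    (hc1 : ((a2, a4) : Pt) ∉ S) (hc2 : ((b1, b3) : Pt) ∉ S) :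
    CornerInter S (Icc a1 a2 ×ˢ Icc a3 a4 : Set Pt) (Icc b1 b2 ×ˢ Icc b3 b4 : Set Pt) := by
  have h12 : a1 ≤ a2 := le_of_lt (lt_of_lt_of_le x1 x2)
  have h34 : a3 ≤ a4 := le_of_lt (lt_of_lt_of_le y1 y2)
  have hb12 : b1 ≤ b2 := le_of_lt (lt_of_le_of_lt x2 x3)
  have hb34 : b3 ≤ b4 := le_of_lt (lt_of_le_of_lt y2 y3)
  have hcA := corners_box h12 h34
  have hcB := corners_box hb12 hb34
  have huB : ∀ c : Pt, c ∈ corners (Icc b1 b2 ×ˢ Icc b3 b4 : Set Pt) →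
      c ∈ (Icc a1 a2 ×ˢ Icc a3 a4 : Set Pt) → c = (b1, b3) := by
    intro c hc hm
    rw [hcB] at hc
    rw [mem_box] at hm
    obtain ⟨hx, hy⟩ := hc
    have hx' : c.1 = b1 := hx.resolve_right (fun h => by rw [h] at hm; linarith [hm.2.1])
    have hy' : c.2 = b3 := hy.resolve_right (fun h => by rw [h] at hm; linarith [hm.2.2.2])
    exact Prod.ext hx' hy'
  have huA : ∀ c : Pt, c ∈ corners (Icc a1 a2 ×ˢ Icc a3 a4 : Set Pt) →
      c ∈ (Icc b1 b2 ×ˢ Icc b3 b4 : Set Pt) → c = (a2, a4) := by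
    intro c hc hm
    rw [hcA] at hc
    rw [mem_box] at hm
    obtain ⟨hx, hy⟩ := hc
    have hx' : c.1 = a2 := hx.resolve_left (fun h => by rw [h] at hm; linarith [hm.1])
    have hy' : c.2 = a4 := hy.resolve_left (fun h => by rw [h] at hm; linarith [hm.2.2.1])
    exact Prod.ext hx' hy'
  have hmB : ((b1, b3) : Pt) ∈ (Icc a1 a2 ×ˢ Icc a3 a4 : Set Pt) := by
    rw [mem_box]; exact ⟨le_of_lt x1, x2, le_of_lt y1, y2⟩
  have hmA : ((a2, a4) : Pt) ∈ (Icc b1 b2 ×ˢ Icc b3 b4 : Set Pt) := by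
    rw [mem_box]; exact ⟨x2, le_of_lt x3, y2, le_of_lt y3⟩
  have hcB' : ((b1, b3) : Pt) ∈ corners (Icc b1 b2 ×ˢ Icc b3 b4 : Set Pt) := by
    rw [hcB]; exact ⟨Or.inl rfl, Or.inl rfl⟩
  have hcA' : ((a2, a4) : Pt) ∈ corners (Icc a1 a2 ×ˢ Icc a3 a4 : Set Pt) := by
    rw [hcA]; exact ⟨Or.inr rfl, Or.inr rfl⟩
  refine ⟨⟨(b1, b3), ⟨hcB', hmB⟩, fun c hc => huB c hc.1 hc.2⟩,
    ⟨(a2, a4), ⟨hcA', hmA⟩, fun c hc => huA c hc.1 hc.2⟩, ?_⟩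
  rintro c (⟨h1, h2⟩ | ⟨h1, h2⟩)
  · rw [huB c h1 h2]; exact hc2
  · rw [huA c h1 h2]; exact hc1

lemma cornerInter_symm {P A B : Set Pt} (h : CornerInter P A B) : CornerInter P B A :=
  ⟨h.2.1, h.1, fun c hc => h.2.2 c (Or.symm hc)⟩

lemma adjPC_symm {P A B : Set Pt} (h : AdjPC P A B) : AdjPC P B A := by
  rcases h with (h | h) | h
  · exact Or.inl (Or.inr h)
  · exact Or.inl (Or.inl h)
  · exact Or.inr (cornerInter_symm h)


lemma D_comm (p q : Pt) : D p q = D q p := by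
  simp [D, min_comm, max_comm]

lemma left_mem_D (p q : Pt) : p ∈ D p q := by
  refine ⟨?_, ?_⟩ <;> exact ⟨min_le_left _ _, le_max_left _ _⟩

lemma right_mem_D (p q : Pt) : q ∈ D p q := by
  refine ⟨?_, ?_⟩ <;> exact ⟨min_le_right _ _, le_max_right _ _⟩

lemma D_eq_box_blue {p q : Pt} (h1 : p.1 ≤ q.1) (h2 : p.2 ≤ q.2) :
    D p q = Icc p.1 q.1 ×ˢ Icc p.2 q.2 := by
  unfold D
  rw [min_eq_left h1, max_eq_right h1, min_eq_left h2, max_eq_right h2]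

lemma D_eq_box_red {p q : Pt} (h1 : p.1 ≤ q.1) (h2 : q.2 ≤ p.2) :
    D p q = Icc p.1 q.1 ×ˢ Icc q.2 p.2 := by
  unfold D
  rw [min_eq_left h1, max_eq_right h1, min_eq_right h2, max_eq_left h2]

/-- Normalized representation of a blue rectangle in `𝓡₁`: the two blue points are
the bottom-left and the top-right corner. -/
def BlueRep (R B A : Set Pt) (p q : Pt) : Prop :=
  p ∈ B ∧ q ∈ B ∧ p ≠ q ∧ p.1 ≤ q.1 ∧ p.2 ≤ q.2 ∧ A = D p q ∧ A ∩ (R ∪ B) = {p, q}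

/-- Normalized representation of a red rectangle in `𝓡₁`: the two red points are
the top-left and the bottom-right corner. -/
def RedRep (R B A : Set Pt) (p q : Pt) : Prop :=
  p ∈ R ∧ q ∈ R ∧ p ≠ q ∧ p.1 ≤ q.1 ∧ q.2 ≤ p.2 ∧ A = D p q ∧ A ∩ (R ∪ B) = {p, q}

lemma fam1_rep {R B : Set Pt} {A : Set Pt} (hA : A ∈ Fam1 R B) :
    (∃ p q, BlueRep R B A p q) ∨ (∃ p q, RedRep R B A p q) := by
  rcases hA with hA | hA
  · left
    obtain ⟨p, q, hpB, hqB, hpq, hAD, hAS, hBL⟩ := hA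
    have hBLA : ((min p.1 q.1, min p.2 q.2) : Pt) ∈ A := by
      rw [hAD]
      exact ⟨⟨le_refl _, min_le_max⟩, le_refl _, min_le_max⟩
    have : ((min p.1 q.1, min p.2 q.2) : Pt) ∈ ({p, q} : Set Pt) := by
      rw [← hAS]; exact ⟨hBLA, hBL⟩
    rcases this with h | h
    · exact ⟨p, q, hpB, hqB, hpq, min_eq_left_iff.mp (congrArg Prod.fst h),
        min_eq_left_iff.mp (congrArg Prod.snd h), hAD, hAS⟩
    · exact ⟨q, p, hqB, hpB, hpq.symm, min_eq_right_iff.mp (congrArg Prod.fst h),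
        min_eq_right_iff.mp (congrArg Prod.snd h), hAD.trans (D_comm p q),
        by rw [hAS]; exact Set.pair_comm p q⟩
  · right
    obtain ⟨p, q, hpR, hqR, hpq, hAD, hAS, hBR⟩ := hA
    have hBRA : ((max p.1 q.1, min p.2 q.2) : Pt) ∈ A := by
      rw [hAD]
      exact ⟨⟨min_le_max, le_refl _⟩, le_refl _, min_le_max⟩
    have : ((max p.1 q.1, min p.2 q.2) : Pt) ∈ ({p, q} : Set Pt) := by
      rw [← hAS]; exact ⟨hBRA, hBR⟩
    rcases this with h | h
    · exact ⟨q, p, hqR, hpR, hpq.symm, max_eq_left_iff.mp (congrArg Prod.fst h),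
        min_eq_left_iff.mp (congrArg Prod.snd h), hAD.trans (D_comm p q),
        by rw [hAS]; exact Set.pair_comm p q⟩
    · exact ⟨p, q, hpR, hqR, hpq, max_eq_right_iff.mp (congrArg Prod.fst h),
        min_eq_right_iff.mp (congrArg Prod.snd h), hAD, hAS⟩

lemma key_bb {R B A A' : Set Pt} {p q p' q' : Pt}
    (h : BlueRep R B A p q) (h' : BlueRep R B A' p' q')
    (hne : A ≠ A') (hadj : ¬ AdjPC (R ∪ B) A A') (hint : (A ∩ A').Nonempty) :
    q = p' ∨ q' = p := by
  obtain ⟨hpB, hqB, hpq, hx, hy, hAD, hAS⟩ := h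
  obtain ⟨hp'B, hq'B, hp'q', hx', hy', hAD', hAS'⟩ := h'
  have hbox : A = Icc p.1 q.1 ×ˢ Icc p.2 q.2 := by rw [hAD]; exact D_eq_box_blue hx hy
  have hbox' : A' = Icc p'.1 q'.1 ×ˢ Icc p'.2 q'.2 := by rw [hAD']; exact D_eq_box_blue hx' hy'
  have memA : ∀ z : Pt, z ∈ A ↔ p.1 ≤ z.1 ∧ z.1 ≤ q.1 ∧ p.2 ≤ z.2 ∧ z.2 ≤ q.2 := by
    intro z; rw [hbox]; exact mem_box
  have memA' : ∀ z : Pt, z ∈ A' ↔ p'.1 ≤ z.1 ∧ z.1 ≤ q'.1 ∧ p'.2 ≤ z.2 ∧ z.2 ≤ q'.2 := by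
    intro z; rw [hbox']; exact mem_box
  have inA : ∀ z : Pt, z ∈ R ∪ B → z ∈ A → z = p ∨ z = q := by
    intro z hz hzA
    have : z ∈ ({p, q} : Set Pt) := by rw [← hAS]; exact ⟨hzA, hz⟩
    simpa using this
  have inA' : ∀ z : Pt, z ∈ R ∪ B → z ∈ A' → z = p' ∨ z = q' := by
    intro z hz hzA
    have : z ∈ ({p', q'} : Set Pt) := by rw [← hAS']; exact ⟨hzA, hz⟩
    simpa using this
  obtain ⟨w, hwA, hwA'⟩ := hint
  obtain ⟨w1, w2, w3, w4⟩ := (memA w).mp hwA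
  obtain ⟨v1, v2, v3, v4⟩ := (memA' w).mp hwA'
  have o1 : p'.1 ≤ q.1 := le_trans v1 w2
  have o2 : p.1 ≤ q'.1 := le_trans w1 v2
  have o3 : p'.2 ≤ q.2 := le_trans v3 w4
  have o4 : p.2 ≤ q'.2 := le_trans w3 v4
  have pierAA' : p'.1 ≤ p.1 → q.1 ≤ q'.1 → p.2 ≤ p'.2 → q'.2 ≤ q.2 → False := by
    intro h1 h2 h3 h4
    refine hadj (Or.inl (Or.inl ?_))
    rw [hbox, hbox']
    exact pierces_box hx hy hx' hy' h1 h2 h3 h4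
  have pierA'A : p.1 ≤ p'.1 → q'.1 ≤ q.1 → p'.2 ≤ p.2 → q.2 ≤ q'.2 → False := by
    intro h1 h2 h3 h4
    refine hadj (Or.inl (Or.inr ?_))
    rw [hbox, hbox']
    exact pierces_box hx' hy' hx hy h1 h2 h3 h4
  by_cases hqp' : q = p'
  · exact Or.inl hqp'
  by_cases hq'p : q' = p
  · exact Or.inr hq'p
  exfalso
  have hAeq : p = p' → q = q' → False := by
    intro e1 e2; exact hne (by rw [hAD, hAD', e1, e2])
  by_cases hp'A : p' ∈ A
  · rcases inA p' (Or.inr hp'B) hp'A with e | e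
    · -- p' = p
      subst e
      by_cases hqA' : q ∈ A'
      · rcases inA' q (Or.inr hqB) hqA' with e2 | e2
        · exact hqp' e2
        · exact hAeq rfl e2
      · have hq1 : q'.1 < q.1 ∨ q'.2 < q.2 := by
          by_contra hc
          push_neg at hc
          exact hqA' ((memA' q).mpr ⟨hx, hc.1, hy, hc.2⟩)
        rcases hq1 with h1 | h1
        · rcases le_or_gt q'.2 q.2 with h2 | h2
          · rcases inA q' (Or.inr hq'B) ((memA q').mpr ⟨o2, le_of_lt h1, hy', h2⟩) with e2 | e2
            · exact hq'p e2
            · rw [e2] at h1; exact lt_irrefl _ h1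
          · exact pierA'A (le_refl _) (le_of_lt h1) (le_refl _) (le_of_lt h2)
        · rcases le_or_gt q'.1 q.1 with h2 | h2
          · rcases inA q' (Or.inr hq'B) ((memA q').mpr ⟨o2, h2, hy', le_of_lt h1⟩) with e2 | e2
            · exact hq'p e2
            · rw [e2] at h1; exact lt_irrefl _ h1
          · exact pierAA' (le_refl _) (le_of_lt h2) (le_refl _) (le_of_lt h1)
    · exact hqp' e.symm
  · by_cases hq'A : q' ∈ A
    · rcases inA q' (Or.inr hq'B) hq'A with e | e
      · exact hq'p e
      · -- q' = q
        subst e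
        by_cases hpA' : p ∈ A'
        · rcases inA' p (Or.inr hpB) hpA' with e2 | e2
          · exact hAeq e2 rfl
          · exact hpq e2
        · have hp1 : p.1 < p'.1 ∨ p.2 < p'.2 := by
            by_contra hc
            push_neg at hc
            exact hpA' ((memA' p).mpr ⟨hc.1, hx, hc.2, hy⟩)
          rcases hp1 with h1 | h1
          · rcases le_or_gt p.2 p'.2 with h2 | h2
            · exact hp'A ((memA p').mpr ⟨le_of_lt h1, o1, h2, o3⟩)
            · exact pierA'A (le_of_lt h1) (le_refl _) (le_of_lt h2) (le_refl _)
          · rcases le_or_gt p.1 p'.1 with h2 | h2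
            · exact hp'A ((memA p').mpr ⟨h2, o1, le_of_lt h1, o3⟩)
            · exact pierAA' (le_of_lt h2) (le_refl _) (le_of_lt h1) (le_refl _)
    · by_cases hpA' : p ∈ A'
      · rcases inA' p (Or.inr hpB) hpA' with e | e
        · exact hp'A (e ▸ (memA p).mpr ⟨le_refl _, hx, le_refl _, hy⟩)
        · exact hq'p e.symm
      · by_cases hqA' : q ∈ A'
        · rcases inA' q (Or.inr hqB) hqA' with e | e
          · exact hqp' e
          · exact hq'A (e ▸ (memA q).mpr ⟨hx, le_refl _, hy, le_refl _⟩)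
        · -- no defining point of either rectangle lies in the other
          have hP : (p.1 < p'.1 ∧ p'.2 < p.2) ∨ (p'.1 < p.1 ∧ p.2 < p'.2) := by
            have n1 : p'.1 < p.1 ∨ p'.2 < p.2 := by
              by_contra hc; push_neg at hc
              exact hp'A ((memA p').mpr ⟨hc.1, o1, hc.2, o3⟩)
            have n2 : p.1 < p'.1 ∨ p.2 < p'.2 := by
              by_contra hc; push_neg at hc
              exact hpA' ((memA' p).mpr ⟨hc.1, o2, hc.2, o4⟩)
            rcases n1 with a | a <;> rcases n2 with b | b
            · exact absurd (lt_trans a b) (lt_irrefl _)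
            · exact Or.inr ⟨a, b⟩
            · exact Or.inl ⟨b, a⟩
            · exact absurd (lt_trans a b) (lt_irrefl _)
          have hQ : (q'.1 < q.1 ∧ q.2 < q'.2) ∨ (q.1 < q'.1 ∧ q'.2 < q.2) := by
            have n1 : q'.1 < q.1 ∨ q'.2 < q.2 := by
              by_contra hc; push_neg at hc
              exact hqA' ((memA' q).mpr ⟨o1, hc.1, o3, hc.2⟩)
            have n2 : q.1 < q'.1 ∨ q.2 < q'.2 := by
              by_contra hc; push_neg at hc
              exact hq'A ((memA q').mpr ⟨o2, hc.1, o4, hc.2⟩)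
            rcases n1 with a | a <;> rcases n2 with b | b
            · exact absurd (lt_trans a b) (lt_irrefl _)
            · exact Or.inl ⟨a, b⟩
            · exact Or.inr ⟨b, a⟩
            · exact absurd (lt_trans a b) (lt_irrefl _)
          rcases hP with ⟨hp1, hp2⟩ | ⟨hp1, hp2⟩ <;> rcases hQ with ⟨hq1, hq2⟩ | ⟨hq1, hq2⟩
          · exact pierA'A (le_of_lt hp1) (le_of_lt hq1) (le_of_lt hp2) (le_of_lt hq2)
          · -- corner configuration, A upper-left
            refine hadj (Or.inr ?_)
            have hc1 : ((q.1, p.2) : Pt) ∉ R ∪ B := by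
              intro hS
              have hmem' : ((q.1, p.2) : Pt) ∈ A' := (memA' _).mpr ⟨o1, le_of_lt hq1, le_of_lt hp2, o4⟩
              rcases inA' _ hS hmem' with e | e
              · have e2 := congrArg Prod.snd e; simp at e2; linarith
              · have e2 := congrArg Prod.fst e; simp at e2; linarith
            have hc2 : ((p'.1, q'.2) : Pt) ∉ R ∪ B := by
              intro hS
              have hmem : ((p'.1, q'.2) : Pt) ∈ A := (memA _).mpr ⟨le_of_lt hp1, o1, o4, le_of_lt hq2⟩
              rcases inA _ hS hmem with e | e
              · have e2 := congrArg Prod.fst e; simp at e2; linarith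
              · have e2 := congrArg Prod.snd e; simp at e2; linarith
            rw [hbox, hbox']
            exact cornerInter_ul hp1 o1 hq1 hp2 o4 hq2 hc1 hc2
          · -- corner configuration, A' upper-left
            refine hadj (Or.inr (cornerInter_symm ?_))
            have hc1 : ((q'.1, p'.2) : Pt) ∉ R ∪ B := by
              intro hS
              have hmem : ((q'.1, p'.2) : Pt) ∈ A := (memA _).mpr ⟨o2, le_of_lt hq1, le_of_lt hp2, o3⟩
              rcases inA _ hS hmem with e | e
              · have e2 := congrArg Prod.snd e; simp at e2; linarith
              · have e2 := congrArg Prod.fst e; simp at e2; linarith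
            have hc2 : ((p.1, q.2) : Pt) ∉ R ∪ B := by
              intro hS
              have hmem' : ((p.1, q.2) : Pt) ∈ A' := (memA' _).mpr ⟨le_of_lt hp1, o2, o3, le_of_lt hq2⟩
              rcases inA' _ hS hmem' with e | e
              · have e2 := congrArg Prod.fst e; simp at e2; linarith
              · have e2 := congrArg Prod.snd e; simp at e2; linarith
            rw [hbox, hbox']
            exact cornerInter_ul hp1 o2 hq1 hp2 o3 hq2 hc1 hc2
          · exact pierAA' (le_of_lt hp1) (le_of_lt hq1) (le_of_lt hp2) (le_of_lt hq2)

lemma key_rr {R B A A' : Set Pt} {p q p' q' : Pt}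
    (h : RedRep R B A p q) (h' : RedRep R B A' p' q')
    (hne : A ≠ A') (hadj : ¬ AdjPC (R ∪ B) A A') (hint : (A ∩ A').Nonempty) :
    q = p' ∨ q' = p := by
  obtain ⟨hpB, hqB, hpq, hx, hy, hAD, hAS⟩ := h
  obtain ⟨hp'B, hq'B, hp'q', hx', hy', hAD', hAS'⟩ := h'
  have hbox : A = Icc p.1 q.1 ×ˢ Icc q.2 p.2 := by rw [hAD]; exact D_eq_box_red hx hy
  have hbox' : A' = Icc p'.1 q'.1 ×ˢ Icc q'.2 p'.2 := by rw [hAD']; exact D_eq_box_red hx' hy'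
  have memA : ∀ z : Pt, z ∈ A ↔ p.1 ≤ z.1 ∧ z.1 ≤ q.1 ∧ q.2 ≤ z.2 ∧ z.2 ≤ p.2 := by
    intro z; rw [hbox]; exact mem_box
  have memA' : ∀ z : Pt, z ∈ A' ↔ p'.1 ≤ z.1 ∧ z.1 ≤ q'.1 ∧ q'.2 ≤ z.2 ∧ z.2 ≤ p'.2 := by
    intro z; rw [hbox']; exact mem_box
  have inA : ∀ z : Pt, z ∈ R ∪ B → z ∈ A → z = p ∨ z = q := by
    intro z hz hzA
    have : z ∈ ({p, q} : Set Pt) := by rw [← hAS]; exact ⟨hzA, hz⟩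
    simpa using this
  have inA' : ∀ z : Pt, z ∈ R ∪ B → z ∈ A' → z = p' ∨ z = q' := by
    intro z hz hzA
    have : z ∈ ({p', q'} : Set Pt) := by rw [← hAS']; exact ⟨hzA, hz⟩
    simpa using this
  obtain ⟨w, hwA, hwA'⟩ := hint
  obtain ⟨w1, w2, w3, w4⟩ := (memA w).mp hwA
  obtain ⟨v1, v2, v3, v4⟩ := (memA' w).mp hwA'
  have o1 : p'.1 ≤ q.1 := le_trans v1 w2
  have o2 : p.1 ≤ q'.1 := le_trans w1 v2
  have o3 : q.2 ≤ p'.2 := le_trans w3 v4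
  have o4 : q'.2 ≤ p.2 := le_trans v3 w4
  have pierAA' : p'.1 ≤ p.1 → q.1 ≤ q'.1 → q.2 ≤ q'.2 → p'.2 ≤ p.2 → False := by
    intro h1 h2 h3 h4
    refine hadj (Or.inl (Or.inl ?_))
    rw [hbox, hbox']
    exact pierces_box hx hy hx' hy' h1 h2 h3 h4
  have pierA'A : p.1 ≤ p'.1 → q'.1 ≤ q.1 → q'.2 ≤ q.2 → p.2 ≤ p'.2 → False := by
    intro h1 h2 h3 h4
    refine hadj (Or.inl (Or.inr ?_))
    rw [hbox, hbox']
    exact pierces_box hx' hy' hx hy h1 h2 h3 h4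
  by_cases hqp' : q = p'
  · exact Or.inl hqp'
  by_cases hq'p : q' = p
  · exact Or.inr hq'p
  exfalso
  have hAeq : p = p' → q = q' → False := by
    intro e1 e2; exact hne (by rw [hAD, hAD', e1, e2])
  by_cases hp'A : p' ∈ A
  · rcases inA p' (Or.inl hp'B) hp'A with e | e
    · -- p' = p
      subst e
      by_cases hqA' : q ∈ A'
      · rcases inA' q (Or.inl hqB) hqA' with e2 | e2
        · exact hqp' e2
        · exact hAeq rfl e2
      · have hq1 : q'.1 < q.1 ∨ q.2 < q'.2 := by
          by_contra hc
          push_neg at hc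
          exact hqA' ((memA' q).mpr ⟨hx, hc.1, hc.2, hy⟩)
        rcases hq1 with h1 | h1
        · rcases le_or_gt q.2 q'.2 with h2 | h2
          · rcases inA q' (Or.inl hq'B) ((memA q').mpr ⟨o2, le_of_lt h1, h2, hy'⟩) with e2 | e2
            · exact hq'p e2
            · rw [e2] at h1; exact lt_irrefl _ h1
          · exact pierA'A (le_refl _) (le_of_lt h1) (le_of_lt h2) (le_refl _)
        · rcases le_or_gt q'.1 q.1 with h2 | h2
          · rcases inA q' (Or.inl hq'B) ((memA q').mpr ⟨o2, h2, le_of_lt h1, hy'⟩) with e2 | e2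
            · exact hq'p e2
            · rw [e2] at h1; exact lt_irrefl _ h1
          · exact pierAA' (le_refl _) (le_of_lt h2) (le_of_lt h1) (le_refl _)
    · exact hqp' e.symm
  · by_cases hq'A : q' ∈ A
    · rcases inA q' (Or.inl hq'B) hq'A with e | e
      · exact hq'p e
      · -- q' = q
        subst e
        by_cases hpA' : p ∈ A'
        · rcases inA' p (Or.inl hpB) hpA' with e2 | e2
          · exact hAeq e2 rfl
          · exact hpq e2
        · have hp1 : p.1 < p'.1 ∨ p'.2 < p.2 := by
            by_contra hc
            push_neg at hc
            exact hpA' ((memA' p).mpr ⟨hc.1, hx, hy, hc.2⟩)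
          rcases hp1 with h1 | h1
          · rcases le_or_gt p'.2 p.2 with h2 | h2
            · exact hp'A ((memA p').mpr ⟨le_of_lt h1, o1, o3, h2⟩)
            · exact pierA'A (le_of_lt h1) (le_refl _) (le_refl _) (le_of_lt h2)
          · rcases le_or_gt p.1 p'.1 with h2 | h2
            · exact hp'A ((memA p').mpr ⟨h2, o1, o3, le_of_lt h1⟩)
            · exact pierAA' (le_of_lt h2) (le_refl _) (le_refl _) (le_of_lt h1)
    · by_cases hpA' : p ∈ A'
      · rcases inA' p (Or.inl hpB) hpA' with e | e
        · exact hp'A (e ▸ (memA p).mpr ⟨le_refl _, hx, hy, le_refl _⟩)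
        · exact hq'p e.symm
      · by_cases hqA' : q ∈ A'
        · rcases inA' q (Or.inl hqB) hqA' with e | e
          · exact hqp' e
          · exact hq'A (e ▸ (memA q).mpr ⟨hx, le_refl _, le_refl _, hy⟩)
        · have hP : (p.1 < p'.1 ∧ p.2 < p'.2) ∨ (p'.1 < p.1 ∧ p'.2 < p.2) := by
            have n1 : p'.1 < p.1 ∨ p.2 < p'.2 := by
              by_contra hc; push_neg at hc
              exact hp'A ((memA p').mpr ⟨hc.1, o1, o3, hc.2⟩)
            have n2 : p.1 < p'.1 ∨ p'.2 < p.2 := by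
              by_contra hc; push_neg at hc
              exact hpA' ((memA' p).mpr ⟨hc.1, o2, o4, hc.2⟩)
            rcases n1 with a | a <;> rcases n2 with b | b
            · exact absurd (lt_trans a b) (lt_irrefl _)
            · exact Or.inr ⟨a, b⟩
            · exact Or.inl ⟨b, a⟩
            · exact absurd (lt_trans a b) (lt_irrefl _)
          have hQ : (q'.1 < q.1 ∧ q'.2 < q.2) ∨ (q.1 < q'.1 ∧ q.2 < q'.2) := by
            have n1 : q'.1 < q.1 ∨ q.2 < q'.2 := by
              by_contra hc; push_neg at hc
              exact hqA' ((memA' q).mpr ⟨o1, hc.1, hc.2, o3⟩)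
            have n2 : q.1 < q'.1 ∨ q'.2 < q.2 := by
              by_contra hc; push_neg at hc
              exact hq'A ((memA q').mpr ⟨o2, hc.1, hc.2, o4⟩)
            rcases n1 with a | a <;> rcases n2 with b | b
            · exact absurd (lt_trans a b) (lt_irrefl _)
            · exact Or.inl ⟨a, b⟩
            · exact Or.inr ⟨b, a⟩
            · exact absurd (lt_trans a b) (lt_irrefl _)
          rcases hP with ⟨hp1, hp2⟩ | ⟨hp1, hp2⟩ <;> rcases hQ with ⟨hq1, hq2⟩ | ⟨hq1, hq2⟩
          · exact pierA'A (le_of_lt hp1) (le_of_lt hq1) (le_of_lt hq2) (le_of_lt hp2)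
          · -- corner configuration, A lower-left
            refine hadj (Or.inr ?_)
            have hc1 : ((q.1, p.2) : Pt) ∉ R ∪ B := by
              intro hS
              have hmem' : ((q.1, p.2) : Pt) ∈ A' :=
                (memA' _).mpr ⟨o1, le_of_lt hq1, o4, le_of_lt hp2⟩
              rcases inA' _ hS hmem' with e | e
              · have e2 := congrArg Prod.snd e; simp at e2; linarith
              · have e2 := congrArg Prod.fst e; simp at e2; linarith
            have hc2 : ((p'.1, q'.2) : Pt) ∉ R ∪ B := by
              intro hS
              have hmem : ((p'.1, q'.2) : Pt) ∈ A :=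
                (memA _).mpr ⟨le_of_lt hp1, o1, le_of_lt hq2, o4⟩
              rcases inA _ hS hmem with e | e
              · have e2 := congrArg Prod.fst e; simp at e2; linarith
              · have e2 := congrArg Prod.snd e; simp at e2; linarith
            rw [hbox, hbox']
            exact cornerInter_ll hp1 o1 hq1 hq2 o4 hp2 hc1 hc2
          · -- corner configuration, A' lower-left
            refine hadj (Or.inr (cornerInter_symm ?_))
            have hc1 : ((q'.1, p'.2) : Pt) ∉ R ∪ B := by
              intro hS
              have hmem : ((q'.1, p'.2) : Pt) ∈ A :=
                (memA _).mpr ⟨o2, le_of_lt hq1, o3, le_of_lt hp2⟩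
              rcases inA _ hS hmem with e | e
              · have e2 := congrArg Prod.snd e; simp at e2; linarith
              · have e2 := congrArg Prod.fst e; simp at e2; linarith
            have hc2 : ((p.1, q.2) : Pt) ∉ R ∪ B := by
              intro hS
              have hmem' : ((p.1, q.2) : Pt) ∈ A' :=
                (memA' _).mpr ⟨le_of_lt hp1, o2, le_of_lt hq2, o3⟩
              rcases inA' _ hS hmem' with e | e
              · have e2 := congrArg Prod.fst e; simp at e2; linarith
              · have e2 := congrArg Prod.snd e; simp at e2; linarith
            rw [hbox, hbox']
            exact cornerInter_ll hp1 o2 hq1 hq2 o3 hp2 hc1 hc2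
          · exact pierAA' (le_of_lt hp1) (le_of_lt hq1) (le_of_lt hq2) (le_of_lt hp2)

lemma key_br {R B A A' : Set Pt} {p q p' q' : Pt} (hdisj : R ∩ B = ∅)
    (h : BlueRep R B A p q) (h' : RedRep R B A' p' q')
    (hadj : ¬ AdjPC (R ∪ B) A A') (hint : (A ∩ A').Nonempty) : False := by
  obtain ⟨hpB, hqB, hpq, hx, hy, hAD, hAS⟩ := h
  obtain ⟨hp'R, hq'R, hp'q', hx', hy', hAD', hAS'⟩ := h'
  have hbox : A = Icc p.1 q.1 ×ˢ Icc p.2 q.2 := by rw [hAD]; exact D_eq_box_blue hx hy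
  have hbox' : A' = Icc p'.1 q'.1 ×ˢ Icc q'.2 p'.2 := by rw [hAD']; exact D_eq_box_red hx' hy'
  have memA : ∀ z : Pt, z ∈ A ↔ p.1 ≤ z.1 ∧ z.1 ≤ q.1 ∧ p.2 ≤ z.2 ∧ z.2 ≤ q.2 := by
    intro z; rw [hbox]; exact mem_box
  have memA' : ∀ z : Pt, z ∈ A' ↔ p'.1 ≤ z.1 ∧ z.1 ≤ q'.1 ∧ q'.2 ≤ z.2 ∧ z.2 ≤ p'.2 := by
    intro z; rw [hbox']; exact mem_box
  have inA : ∀ z : Pt, z ∈ R ∪ B → z ∈ A → z = p ∨ z = q := by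
    intro z hz hzA
    have : z ∈ ({p, q} : Set Pt) := by rw [← hAS]; exact ⟨hzA, hz⟩
    simpa using this
  have inA' : ∀ z : Pt, z ∈ R ∪ B → z ∈ A' → z = p' ∨ z = q' := by
    intro z hz hzA
    have : z ∈ ({p', q'} : Set Pt) := by rw [← hAS']; exact ⟨hzA, hz⟩
    simpa using this
  have hRB : ∀ z : Pt, z ∈ R → z ∈ B → False := by
    intro z h1 h2
    have : z ∈ R ∩ B := ⟨h1, h2⟩
    rw [hdisj] at this
    exact this
  obtain ⟨w, hwA, hwA'⟩ := hint
  obtain ⟨w1, w2, w3, w4⟩ := (memA w).mp hwA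
  obtain ⟨v1, v2, v3, v4⟩ := (memA' w).mp hwA'
  have o1 : p'.1 ≤ q.1 := le_trans v1 w2
  have o2 : p.1 ≤ q'.1 := le_trans w1 v2
  have o3 : p.2 ≤ p'.2 := le_trans w3 v4
  have o4 : q'.2 ≤ q.2 := le_trans v3 w4
  -- no defining point of one rectangle can lie in the other (colors differ)
  have np : p ∉ A' := by
    intro hm
    rcases inA' p (Or.inr hpB) hm with e | e
    · exact hRB p (e ▸ hp'R) hpB
    · exact hRB p (e ▸ hq'R) hpB
  have nq : q ∉ A' := by
    intro hm
    rcases inA' q (Or.inr hqB) hm with e | e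
    · exact hRB q (e ▸ hp'R) hqB
    · exact hRB q (e ▸ hq'R) hqB
  have np' : p' ∉ A := by
    intro hm
    rcases inA p' (Or.inl hp'R) hm with e | e
    · exact hRB p' hp'R (e ▸ hpB)
    · exact hRB p' hp'R (e ▸ hqB)
  have nq' : q' ∉ A := by
    intro hm
    rcases inA q' (Or.inl hq'R) hm with e | e
    · exact hRB q' hq'R (e ▸ hpB)
    · exact hRB q' hq'R (e ▸ hqB)
  have hP : (p.1 < p'.1 ∧ q.2 < p'.2) ∨ (p.2 < q'.2 ∧ p'.1 < p.1) ∨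
      (p.2 < q'.2 ∧ q.2 < p'.2) := by
    have n1 : p.1 < p'.1 ∨ p.2 < q'.2 := by
      by_contra hc; push_neg at hc
      exact np ((memA' p).mpr ⟨hc.1, o2, hc.2, o3⟩)
    have n2 : p'.1 < p.1 ∨ q.2 < p'.2 := by
      by_contra hc; push_neg at hc
      exact np' ((memA p').mpr ⟨hc.1, o1, o3, hc.2⟩)
    rcases n1 with a | a <;> rcases n2 with b | b
    · exact absurd (lt_trans a b) (lt_irrefl _)
    · exact Or.inl ⟨a, b⟩
    · exact Or.inr (Or.inl ⟨a, b⟩)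
    · exact Or.inr (Or.inr ⟨a, b⟩)
  have hQ : (q'.1 < q.1 ∧ q'.2 < p.2) ∨ (p'.2 < q.2 ∧ q.1 < q'.1) ∨
      (p'.2 < q.2 ∧ q'.2 < p.2) := by
    have n1 : q'.1 < q.1 ∨ p'.2 < q.2 := by
      by_contra hc; push_neg at hc
      exact nq ((memA' q).mpr ⟨o1, hc.1, o4, hc.2⟩)
    have n2 : q.1 < q'.1 ∨ q'.2 < p.2 := by
      by_contra hc; push_neg at hc
      exact nq' ((memA q').mpr ⟨o2, hc.1, hc.2, o4⟩)
    rcases n1 with a | a <;> rcases n2 with b | b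
    · exact absurd (lt_trans a b) (lt_irrefl _)
    · exact Or.inl ⟨a, b⟩
    · exact Or.inr (Or.inl ⟨a, b⟩)
    · exact Or.inr (Or.inr ⟨a, b⟩)
  rcases hP with ⟨hp1, hp2⟩ | ⟨hp1, hp2⟩ | ⟨hp1, hp2⟩ <;>
    rcases hQ with ⟨hq1, hq2⟩ | ⟨hq1, hq2⟩ | ⟨hq1, hq2⟩
  · -- p.1<p'.1, q.2<p'.2, q'.1<q.1, q'.2<p.2 : Pierces A' A
    refine hadj (Or.inl (Or.inr ?_))
    rw [hbox, hbox']
    exact pierces_box hx' hy' hx hy (le_of_lt hp1) (le_of_lt hq1)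
      (le_of_lt hq2) (le_of_lt hp2)
  · linarith
  · linarith
  · linarith
  · -- p.2<q'.2, p'.1<p.1, p'.2<q.2, q.1<q'.1 : Pierces A A'
    refine hadj (Or.inl (Or.inl ?_))
    rw [hbox, hbox']
    exact pierces_box hx hy hx' hy' (le_of_lt hp2) (le_of_lt hq2)
      (le_of_lt hp1) (le_of_lt hq1)
  · linarith
  · linarith
  · linarith
  · linarith

lemma sum_lt_blue {u v : Pt} (h : u ≠ v) (h1 : u.1 ≤ v.1) (h2 : u.2 ≤ v.2) :
    u.1 + u.2 < v.1 + v.2 := by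
  by_contra hc
  push_neg at hc
  have e1 : u.1 = v.1 := le_antisymm h1 (by linarith)
  have e2 : u.2 = v.2 := le_antisymm h2 (by linarith)
  exact h (Prod.ext e1 e2)

lemma sum_lt_red {u v : Pt} (h : u ≠ v) (h1 : u.1 ≤ v.1) (h2 : v.2 ≤ u.2) :
    u.1 - u.2 < v.1 - v.2 := by
  by_contra hc
  push_neg at hc
  have e1 : u.1 = v.1 := le_antisymm h1 (by linarith)
  have e2 : u.2 = v.2 := le_antisymm (by linarith) h2
  exact h (Prod.ext e1 e2)

/-- Abstract extraction lemma: from a family whose conflicts form a partial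
injection increasing a potential, extract a pairwise-disjoint subfamily of at
least half the size. -/
lemma extract_abs (f g : Set Pt → Pt) (ψ : Pt → ℝ) :
    ∀ (n : ℕ) (I : Set (Set Pt)), I.Finite → I.ncard = n →
    (∀ A ∈ I, g A ∈ A) →
    (∀ A ∈ I, ∀ B ∈ I, g A = f B → ψ (g A) < ψ (g B)) →
    (∀ A ∈ I, ∀ B ∈ I, A ≠ B → (A ∩ B).Nonempty → g A = f B ∨ g B = f A) →
    ∃ J ⊆ I, J.Pairwise (fun X Y => X ∩ Y = ∅) ∧ I.ncard ≤ 2 * J.ncard := by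
  intro n
  induction n using Nat.strong_induction_on with
  | _ n ih =>
    intro I hfin hcard hg hψ hconf
    rcases Set.eq_empty_or_nonempty I with rfl | hne
    · exact ⟨∅, Set.Subset.refl _, Set.pairwise_empty _, by simp⟩
    obtain ⟨A, hA, hmax⟩ := Set.exists_max_image I (fun X => ψ (g X)) hfin hne
    set P : Set (Set Pt) := {C | C ∈ I ∧ C ≠ A ∧ (A ∩ C).Nonempty} with hPdef
    have hPsub : P ⊆ I := fun C hC => hC.1
    have hPconf : ∀ C ∈ P, g C = f A := by
      intro C hC
      rcases hconf A hA C hC.1 (Ne.symm hC.2.1) hC.2.2 with e | e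
      · exact absurd (hψ A hA C hC.1 e) (not_lt.mpr (hmax C hC.1))
      · exact e
    have hPsing : ∀ C₁ ∈ P, ∀ C₂ ∈ P, C₁ = C₂ := by
      intro C₁ h1 C₂ h2
      by_contra hne12
      have e1 := hPconf C₁ h1
      have e2 := hPconf C₂ h2
      have hfAC1 : f A ∈ C₁ := e1 ▸ hg C₁ h1.1
      have hfAC2 : f A ∈ C₂ := e2 ▸ hg C₂ h2.1
      rcases hconf C₁ h1.1 C₂ h2.1 hne12 ⟨f A, hfAC1, hfAC2⟩ with e | e
      · have h3 := hψ C₁ h1.1 C₂ h2.1 e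
        rw [e1, e2] at h3
        exact lt_irrefl _ h3
      · have h3 := hψ C₂ h2.1 C₁ h1.1 e
        rw [e1, e2] at h3
        exact lt_irrefl _ h3
    have hPfin : P.Finite := hfin.subset hPsub
    have hPcard : P.ncard ≤ 1 := by
      rcases Set.eq_empty_or_nonempty P with he | ⟨C, hC⟩
      · simp [he]
      · have : P = {C} := Set.eq_singleton_iff_unique_mem.mpr
          ⟨hC, fun D hD => hPsing D hD C hC⟩
        simp [this]
    set I' : Set (Set Pt) := I \ ({A} ∪ P) with hI'def
    have hI'sub : I' ⊆ I := Set.diff_subset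
    have hI'fin : I'.Finite := hfin.subset hI'sub
    have hAI' : A ∉ I' := fun h => h.2 (Or.inl rfl)
    have hI'lt : I'.ncard < n := by
      rw [← hcard]
      exact Set.ncard_lt_ncard ⟨hI'sub, fun hsub2 => hAI' (hsub2 hA)⟩ hfin
    obtain ⟨J', hJ'sub, hJ'pw, hJ'card⟩ := ih I'.ncard hI'lt I' hI'fin rfl
      (fun X hX => hg X (hI'sub hX))
      (fun X hX Y hY => hψ X (hI'sub hX) Y (hI'sub hY))
      (fun X hX Y hY => hconf X (hI'sub hX) Y (hI'sub hY))
    have hAJ' : A ∉ J' := fun h => hAI' (hJ'sub h)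
    have hJ'fin : J'.Finite := hI'fin.subset hJ'sub
    refine ⟨insert A J', ?_, ?_, ?_⟩
    · exact Set.insert_subset hA ((hJ'sub.trans hI'sub))
    · refine (@Set.pairwise_insert_of_symm _ _ _ _ ⟨?_⟩).mpr ⟨hJ'pw, ?_⟩
      · intro X Y hXY
        rw [Set.inter_comm]
        exact hXY
      · intro C hC hACne
        have hCI' : C ∈ I' := hJ'sub hC
        have hCnotP : C ∉ P := fun h => hCI'.2 (Or.inr h)
        by_contra hnonz
        exact hCnotP ⟨hCI'.1, fun h => hACne h.symm,
          Set.nonempty_iff_ne_empty.mpr hnonz⟩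
    · have hsplit : I ⊆ I' ∪ ({A} ∪ P) := by
        intro X hX
        by_cases hX2 : X ∈ {A} ∪ P
        · exact Or.inr hX2
        · exact Or.inl ⟨hX, hX2⟩
      have h1 : I.ncard ≤ I'.ncard + ({A} ∪ P).ncard := by
        calc I.ncard ≤ (I' ∪ ({A} ∪ P)).ncard :=
              Set.ncard_le_ncard hsplit ((hI'fin.union ((Set.finite_singleton A).union hPfin)))
          _ ≤ I'.ncard + ({A} ∪ P).ncard := Set.ncard_union_le _ _
      have h2 : ({A} ∪ P).ncard ≤ 2 := by
        calc ({A} ∪ P).ncard ≤ ({A} : Set (Set Pt)).ncard + P.ncard := Set.ncard_union_le _ _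
          _ ≤ 1 + 1 := by
              have : ({A} : Set (Set Pt)).ncard = 1 := Set.ncard_singleton A
              omega
          _ = 2 := rfl
      have h3 : (insert A J').ncard = J'.ncard + 1 := Set.ncard_insert_of_notMem hAJ' hJ'fin
      omega

lemma extract_main {R B : Set Pt} (hdisj : R ∩ B = ∅) (I : Set (Set Pt))
    (hIfin : I.Finite) (hsub : I ⊆ Fam1 R B)
    (hind : I.Pairwise fun X Y => ¬ AdjPC (R ∪ B) X Y) :
    ∃ J ⊆ I, J.Pairwise (fun X Y => X ∩ Y = ∅) ∧ I.ncard ≤ 2 * J.ncard := by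
  classical
  set Ib : Set (Set Pt) := {A | A ∈ I ∧ ∃ p q, BlueRep R B A p q} with hIbdef
  set Ir : Set (Set Pt) := I \ Ib with hIrdef
  have hIbsub : Ib ⊆ I := fun A hA => hA.1
  have hIrsub : Ir ⊆ I := Set.diff_subset
  -- choice of blue representatives
  have hbchoice : ∀ A : Set Pt, ∃ pq : Pt × Pt,
      (∃ p q, BlueRep R B A p q) → BlueRep R B A pq.1 pq.2 := by
    intro A
    by_cases h : ∃ p q, BlueRep R B A p q
    · obtain ⟨p, q, hpq⟩ := h
      exact ⟨(p, q), fun _ => hpq⟩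
    · exact ⟨(((0:ℝ), (0:ℝ)), ((0:ℝ), (0:ℝ))), fun h2 => absurd h2 h⟩
  choose fb hfb using hbchoice
  have hrchoice : ∀ A : Set Pt, ∃ pq : Pt × Pt,
      (∃ p q, RedRep R B A p q) → RedRep R B A pq.1 pq.2 := by
    intro A
    by_cases h : ∃ p q, RedRep R B A p q
    · obtain ⟨p, q, hpq⟩ := h
      exact ⟨(p, q), fun _ => hpq⟩
    · exact ⟨(((0:ℝ), (0:ℝ)), ((0:ℝ), (0:ℝ))), fun h2 => absurd h2 h⟩
  choose fr hfr using hrchoice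
  have hblue : ∀ A ∈ Ib, BlueRep R B A (fb A).1 (fb A).2 := fun A hA => hfb A hA.2
  have hred : ∀ A ∈ Ir, RedRep R B A (fr A).1 (fr A).2 := by
    intro A hA
    refine hfr A ?_
    rcases fam1_rep (hsub hA.1) with hb | hr
    · exact absurd ⟨hA.1, hb⟩ hA.2
    · exact hr
  -- blue extraction
  obtain ⟨Jb, hJbsub, hJbpw, hJbcard⟩ :=
    extract_abs (fun A => (fb A).1) (fun A => (fb A).2) (fun z => z.1 + z.2)
      Ib.ncard Ib (hIfin.subset hIbsub) rfl
      (by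
        intro A hA
        have h := hblue A hA
        show (fb A).2 ∈ A
        have hm := right_mem_D (fb A).1 (fb A).2
        rw [← h.2.2.2.2.2.1] at hm
        exact hm)
      (by
        intro A hA C hC e
        have hC' := hblue C hC
        have e' : (fb A).2 = (fb C).1 := e
        show (fb A).2.1 + (fb A).2.2 < (fb C).2.1 + (fb C).2.2
        rw [e']
        exact sum_lt_blue hC'.2.2.1 hC'.2.2.2.1 hC'.2.2.2.2.1)
      (by
        intro A hA C hC hne hint
        exact key_bb (hblue A hA) (hblue C hC) hne
          (hind (hIbsub hA) (hIbsub hC) hne) hint)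
  -- red extraction
  obtain ⟨Jr, hJrsub, hJrpw, hJrcard⟩ :=
    extract_abs (fun A => (fr A).1) (fun A => (fr A).2) (fun z => z.1 - z.2)
      Ir.ncard Ir (hIfin.subset hIrsub) rfl
      (by
        intro A hA
        have h := hred A hA
        show (fr A).2 ∈ A
        have hm := right_mem_D (fr A).1 (fr A).2
        rw [← h.2.2.2.2.2.1] at hm
        exact hm)
      (by
        intro A hA C hC e
        have hC' := hred C hC
        have e' : (fr A).2 = (fr C).1 := e
        show (fr A).2.1 - (fr A).2.2 < (fr C).2.1 - (fr C).2.2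
        rw [e']
        exact sum_lt_red hC'.2.2.1 hC'.2.2.2.1 hC'.2.2.2.2.1)
      (by
        intro A hA C hC hne hint
        exact key_rr (hred A hA) (hred C hC) hne
          (hind (hIrsub hA) (hIrsub hC) hne) hint)
  have hJbfin : Jb.Finite := (hIfin.subset hIbsub).subset hJbsub
  have hJrfin : Jr.Finite := (hIfin.subset hIrsub).subset hJrsub
  refine ⟨Jb ∪ Jr, Set.union_subset (hJbsub.trans hIbsub) (hJrsub.trans hIrsub), ?_, ?_⟩
  · intro X hX Y hY hne
    rcases hX with hXb | hXr <;> rcases hY with hYb | hYr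
    · exact hJbpw hXb hYb hne
    · -- X blue, Y red
      by_contra hne0
      have hint : (X ∩ Y).Nonempty := Set.nonempty_iff_ne_empty.mpr hne0
      exact key_br hdisj (hblue X (hJbsub hXb)) (hred Y (hJrsub hYr))
        (hind (hIbsub (hJbsub hXb)) (hIrsub (hJrsub hYr)) hne) hint
    · -- X red, Y blue
      by_contra hne0
      have hint : (Y ∩ X).Nonempty := by
        rw [Set.inter_comm]
        exact Set.nonempty_iff_ne_empty.mpr hne0
      exact key_br hdisj (hblue Y (hJbsub hYb)) (hred X (hJrsub hXr))
        (hind (hIbsub (hJbsub hYb)) (hIrsub (hJrsub hXr)) hne.symm) hint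
    · exact hJrpw hXr hYr hne
  · have hdisjJ : Disjoint Jb Jr := by
      rw [Set.disjoint_left]
      intro X hXb hXr
      exact (hJrsub hXr).2 (hJbsub hXb)
    have hcardU : (Jb ∪ Jr).ncard = Jb.ncard + Jr.ncard :=
      Set.ncard_union_eq hdisjJ hJbfin hJrfin
    have hIbfin : Ib.Finite := hIfin.subset hIbsub
    have hcardI : Ir.ncard = I.ncard - Ib.ncard := Set.ncard_diff hIbsub hIbfin
    have hle : Ib.ncard ≤ I.ncard := Set.ncard_le_ncard hIbsub hIfin
    omega

lemma fam1_box {R B : Set Pt} {A : Set Pt} (hA : A ∈ Fam1 R B) :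
    ∃ a1 a2 a3 a4 : ℝ, a1 ≤ a2 ∧ a3 ≤ a4 ∧ A = Icc a1 a2 ×ˢ Icc a3 a4 := by
  rcases fam1_rep hA with ⟨p, q, h⟩ | ⟨p, q, h⟩
  · exact ⟨p.1, q.1, p.2, q.2, h.2.2.2.1, h.2.2.2.2.1,
      by rw [h.2.2.2.2.2.1]; exact D_eq_box_blue h.2.2.2.1 h.2.2.2.2.1⟩
  · exact ⟨p.1, q.1, q.2, p.2, h.2.2.2.1, h.2.2.2.2.1,
      by rw [h.2.2.2.2.2.1]; exact D_eq_box_red h.2.2.2.1 h.2.2.2.2.1⟩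

lemma corners_subset_box {a1 a2 a3 a4 : ℝ} (h12 : a1 ≤ a2) (h34 : a3 ≤ a4) :
    corners (Icc a1 a2 ×ˢ Icc a3 a4 : Set Pt) ⊆ (Icc a1 a2 ×ˢ Icc a3 a4 : Set Pt) := by
  intro c hc
  rw [corners_box h12 h34] at hc
  rw [mem_box]
  obtain ⟨hx, hy⟩ := hc
  constructor
  · rcases hx with h | h <;> rw [h] <;> linarith
  constructor
  · rcases hx with h | h <;> rw [h] <;> linarith
  constructor
  · rcases hy with h | h <;> rw [h] <;> linarith
  · rcases hy with h | h <;> rw [h] <;> linarith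

lemma adj_inter_nonempty {R B : Set Pt} {A A' : Set Pt}
    (hA : A ∈ Fam1 R B) (hA' : A' ∈ Fam1 R B)
    (h : AdjPC (R ∪ B) A A') : (A ∩ A').Nonempty := by
  obtain ⟨a1, a2, a3, a4, h12, h34, hbox⟩ := fam1_box hA
  obtain ⟨b1, b2, b3, b4, g12, g34, hbox'⟩ := fam1_box hA'
  rcases h with (hp | hp) | hc
  · -- Pierces A A'
    obtain ⟨hfst, hsnd⟩ := hp
    rw [hbox, hbox', fst_box h34, fst_box g34] at hfst
    rw [hbox, hbox', snd_box h12, snd_box g12] at hsnd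
    refine ⟨(a1, b3), ?_, ?_⟩
    · rw [hbox, mem_box]
      have hb3 : b3 ∈ Icc a3 a4 := hsnd ⟨le_refl _, g34⟩
      exact ⟨le_refl _, h12, hb3.1, hb3.2⟩
    · rw [hbox', mem_box]
      have ha1 : a1 ∈ Icc b1 b2 := hfst ⟨le_refl _, h12⟩
      exact ⟨ha1.1, ha1.2, le_refl _, g34⟩
  · -- Pierces A' A
    obtain ⟨hfst, hsnd⟩ := hp
    rw [hbox, hbox', fst_box h34, fst_box g34] at hfst
    rw [hbox, hbox', snd_box h12, snd_box g12] at hsnd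
    refine ⟨(b1, a3), ?_, ?_⟩
    · rw [hbox, mem_box]
      have hb1 : b1 ∈ Icc a1 a2 := hfst ⟨le_refl _, g12⟩
      exact ⟨hb1.1, hb1.2, le_refl _, h34⟩
    · rw [hbox', mem_box]
      have ha3 : a3 ∈ Icc b3 b4 := hsnd ⟨le_refl _, h34⟩
      exact ⟨le_refl _, g12, ha3.1, ha3.2⟩
  · -- corner intersection
    obtain ⟨⟨c, ⟨hcB, hcA⟩, -⟩, -, -⟩ := hc
    refine ⟨c, hcA, ?_⟩
    rw [hbox'] at hcB ⊢
    exact corners_subset_box g12 g34 hcB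
  
lemma fam1_finite {R B : Set Pt} (hfin : (R ∪ B).Finite) : (Fam1 R B).Finite := by
  refine Set.Finite.subset ((hfin.prod hfin).image (fun z : Pt × Pt => D z.1 z.2)) ?_
  intro A hA
  rcases fam1_rep hA with ⟨p, q, h⟩ | ⟨p, q, h⟩
  · exact ⟨(p, q), ⟨Or.inr h.1, Or.inr h.2.1⟩, h.2.2.2.2.2.1.symm⟩
  · exact ⟨(p, q), ⟨Or.inl h.1, Or.inl h.2.1⟩, h.2.2.2.2.2.1.symm⟩
end Stmt9Aux

/-- For `OPT₁` the maximum size of a pairwise-disjoint subfamily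
of `𝓡₁` and `M` the maximum size of an independent set of `G_{p,c}(𝓡₁)`, we
have `OPT₁ ≤ M ≤ 2 · OPT₁`. -/
theorem stmt9 (R B : Set Pt) (hfin : (R ∪ B).Finite) (hdisj : R ∩ B = ∅) :
    maxDisjoint (Fam1 R B) ≤ maxIndepPC (R ∪ B) (Fam1 R B) ∧
    maxIndepPC (R ∪ B) (Fam1 R B) ≤ 2 * maxDisjoint (Fam1 R B) := by
  classical
  have hF : (Fam1 R B).Finite := Stmt9Aux.fam1_finite hfin
  set DS : Set ℕ :=
    {n | ∃ I ⊆ Fam1 R B, I.Pairwise (fun A B => A ∩ B = ∅) ∧ I.ncard = n} with hDS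
  set IS : Set ℕ :=
    {n | ∃ I, IndepPC (R ∪ B) (Fam1 R B) I ∧ I.ncard = n} with hIS
  have e1 : maxDisjoint (Fam1 R B) = sSup DS := rfl
  have e2 : maxIndepPC (R ∪ B) (Fam1 R B) = sSup IS := rfl
  have hDS0 : 0 ∈ DS := ⟨∅, Set.empty_subset _, Set.pairwise_empty _, Set.ncard_empty _⟩
  have hIS0 : 0 ∈ IS := ⟨∅, ⟨Set.empty_subset _, Set.pairwise_empty _⟩, Set.ncard_empty _⟩
  have hDSbdd : BddAbove DS := by
    refine ⟨(Fam1 R B).ncard, ?_⟩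
    rintro n ⟨I, hsub, -, rfl⟩
    exact Set.ncard_le_ncard hsub hF
  have hISbdd : BddAbove IS := by
    refine ⟨(Fam1 R B).ncard, ?_⟩
    rintro n ⟨I, hI, rfl⟩
    exact Set.ncard_le_ncard hI.1 hF
  have hmax1 : sSup DS ∈ DS := Nat.sSup_mem ⟨0, hDS0⟩ hDSbdd
  have hmax2 : sSup IS ∈ IS := Nat.sSup_mem ⟨0, hIS0⟩ hISbdd
  constructor
  · obtain ⟨J, hJsub, hJpw, hJcard⟩ := hmax1
    have hJindep : IndepPC (R ∪ B) (Fam1 R B) J := by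
      refine ⟨hJsub, ?_⟩
      intro X hX Y hY hne hadj
      have hne2 := Stmt9Aux.adj_inter_nonempty (hJsub hX) (hJsub hY) hadj
      rw [hJpw hX hY hne] at hne2
      exact Set.not_nonempty_empty hne2
    rw [e1, e2]
    calc sSup DS = J.ncard := hJcard.symm
      _ ≤ sSup IS := le_csSup hISbdd ⟨J, hJindep, rfl⟩
  · obtain ⟨I, ⟨hIsub, hIpw⟩, hIcard⟩ := hmax2
    obtain ⟨J, hJsub, hJpw, hJcard⟩ :=
      Stmt9Aux.extract_main hdisj I (hF.subset hIsub) hIsub hIpw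
    have hJDS : J.ncard ∈ DS := ⟨J, hJsub.trans hIsub, hJpw, rfl⟩
    have hle : J.ncard ≤ sSup DS := le_csSup hDSbdd hJDS
    rw [e1, e2]
    calc sSup IS = I.ncard := hIcard.symm
      _ ≤ 2 * J.ncard := hJcard
      _ ≤ 2 * sSup DS := by omega
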